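/- arXiv:1002.4404 — 2 statements merged into one kernel-verified Lean document; each statement's English description precedes it below -/
import Mathlib

section
/- With A(x) as above, the operator (P_f μ)(x) = (f(x)/A(x)²) ∫_G χ(g) f(gx) μ(gx) dg on L²(M, Λ*T*M) is idempotent: P_f² = P_f. -/
open scoped ENNReal
open MeasureTheory

lemma aux_comp {G : Type*} [Group G] [MeasurableSpace G] (ν : Measure G)
    (hright : ∀ h : G, MeasurePreserving (fun g : G => g * h) ν ν)
    {F : Type*} [NormedAddCommGroup F] [NormedSpace ℝ F]
    (g : G) (φ : G → F) : ∫ h, φ (h * g) ∂ν = ∫ h, φ h ∂ν := by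
  have he : MeasurableEmbedding (fun h : G => h * g) :=
    MeasurableEquiv.measurableEmbedding
      { toEquiv := ⟨fun h => h * g, fun h => h * g⁻¹,
          fun h => by simp, fun h => by simp⟩
        measurable_toFun := (hright g).measurable
        measurable_invFun := (hright g⁻¹).measurable }
  exact (hright g).integral_comp he φ

/-- With `A(x)² = ∫_G χ(g) f(gx)² dg > 0` as before, the operator
`(P_f μ)(x) = (f(x)/A(x)²) ∫_G χ(g) f(gx) μ(gx) dg` on `L²(M, Λ*T*M)`
(forms abstracted as `L²` functions with values in an inner product space `E`)
is idempotent: `P_f² = P_f`. -/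
theorem stmt7 (G M E : Type*) [Group G] [MeasurableSpace G] [MeasurableSpace M]
    [MulAction G M] [NormedAddCommGroup E] [InnerProductSpace ℝ E] [CompleteSpace E]
    (ν : Measure G) (μM : Measure M)
    (hright : ∀ h : G, MeasurePreserving (fun g : G => g * h) ν ν)
    (hμM : ∀ g : G, MeasurePreserving (fun x : M => g • x) μM μM)
    (χ : G → ℝ) (hχpos : ∀ g : G, 0 < χ g)
    (hχmul : ∀ g h : G, χ (g * h) = χ g * χ h)
    (hχinv : ∀ φ : G → ℝ≥0∞, ∫⁻ g, φ g⁻¹ ∂ν = ∫⁻ g, ENNReal.ofReal (χ g) * φ g ∂ν)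
    (f : M → ℝ) (A2 : M → ℝ)
    (hA2 : ∀ x : M, A2 x = ∫ g, χ g * f (g • x) ^ 2 ∂ν)
    (hA2pos : ∀ x : M, 0 < A2 x)
    (P : (M → E) → (M → E))
    (hP : ∀ (w : M → E) (x : M),
      P w x = (f x / A2 x) • ∫ g, (χ g * f (g • x)) • w (g • x) ∂ν) :
    ∀ w : M → E, MemLp w 2 μM → P (P w) = P w := by
  intro w _
  have hχne : ∀ g : G, χ g ≠ 0 := fun g => (hχpos g).ne'
  -- the inner integral
  let I : M → E := fun y => ∫ g, (χ g * f (g • y)) • w (g • y) ∂ν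
  have hIx : ∀ y : M, (∫ g, (χ g * f (g • y)) • w (g • y) ∂ν) = I y := fun y => rfl
  have hIeq : ∀ (g : G) (y : M), I (g • y) = (χ g)⁻¹ • I y := by
    intro g y
    have hfun : (fun h => (χ h * f (h • (g • y))) • w (h • (g • y)))
        = fun h => (χ g)⁻¹ • ((χ (h * g) * f ((h * g) • y)) • w ((h * g) • y)) := by
      funext h
      rw [← mul_smul h g y, smul_smul, hχmul]
      congr 1
      field_simp [hχne g]
    show (∫ h, (χ h * f (h • (g • y))) • w (h • (g • y)) ∂ν) = (χ g)⁻¹ • I y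
    rw [hfun, integral_smul,
      aux_comp ν hright g (fun k => (χ k * f (k • y)) • w (k • y))]
  have hA2eq : ∀ (g : G) (y : M), A2 (g • y) = (χ g)⁻¹ * A2 y := by
    intro g y
    rw [hA2, hA2]
    have step1 : (fun h => χ h * f (h • (g • y)) ^ 2)
        = fun h => (χ g)⁻¹ * (χ (h * g) * f ((h * g) • y) ^ 2) := by
      funext h
      rw [← mul_smul h g y, hχmul]
      field_simp [hχne g]
    rw [step1, integral_const_mul,
      aux_comp ν hright g (fun k => χ k * f (k • y) ^ 2)]
  funext x
  have key : (fun g : G => (χ g * f (g • x)) • P w (g • x))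
      = fun g : G => (χ g * f (g • x) ^ 2 * (A2 x)⁻¹) • I x := by
    funext g
    rw [hP w (g • x), hA2eq g x, hIx (g • x), hIeq g x, smul_smul, smul_smul]
    congr 1
    field_simp [hχne g, (hA2pos x).ne']
  rw [hP (P w) x, hP w x, hIx x, key]
  have hstep : ∫ g, (χ g * f (g • x) ^ 2 * (A2 x)⁻¹) • I x ∂ν
      = ((∫ g, χ g * f (g • x) ^ 2 ∂ν) * (A2 x)⁻¹) • I x := by
    rw [integral_smul_const, integral_mul_const]
  rw [hstep, ← hA2 x, mul_inv_cancel₀ (hA2pos x).ne', one_smul]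
end

section
/- In the abstract Hodge setting, the induced map H from the cohomology ker(d_f)/Im(d_f) to the harmonic space ker Δ̃ is a linear isomorphism. Consequently, if ker Δ̃ is finite dimensional, then the cohomology ker(d_f)/Im(d_f) is finite dimensional. -/
open scoped RealInnerProductSpace

/-- In the abstract Hodge setting (Hilbert space `H`, `d` with
`d² = 0` and adjoint `d*`, Laplacian `Δ̃ = dd* + d*d` with orthogonal Hodge
decomposition `H = ker Δ̃ ⊕ Im Δ̃`, projection `π` onto `ker Δ̃`, Green
operator `𝔊` commuting with `d`, and `ker Δ̃ ⊆ ker d ∩ ker d*`), the induced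
map `H` (given by `π`) from the cohomology `ker d / Im d` to the harmonic
space `ker Δ̃` is a linear isomorphism.  Consequently, if `ker Δ̃` is finite
dimensional, then the cohomology `ker d / Im d` is finite dimensional. -/
theorem stmt15 {H : Type*} [NormedAddCommGroup H] [InnerProductSpace ℝ H]
    (d dstar Δ π Gr : H →ₗ[ℝ] H)
    (hd2 : ∀ x : H, d (d x) = 0)
    (hadj : ∀ x y : H, ⟪d x, y⟫ = ⟪x, dstar y⟫)
    (hΔ : ∀ x : H, Δ x = d (dstar x) + dstar (d x))
    (hπker : ∀ x : H, Δ (π x) = 0)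
    (hπid : ∀ x : H, Δ x = 0 → π x = x)
    (hGr : ∀ x : H, Δ (Gr x) = x - π x)
    (hGrd : ∀ x : H, d (Gr x) = Gr (d x))
    (hker_d : ∀ x : H, Δ x = 0 → d x = 0)
    (hker_dstar : ∀ x : H, Δ x = 0 → dstar x = 0) :
    (∃ e : (↥(LinearMap.ker d) ⧸
        Submodule.comap (LinearMap.ker d).subtype (LinearMap.range d)) ≃ₗ[ℝ]
        ↥(LinearMap.ker Δ),
      ∀ x : ↥(LinearMap.ker d), ((e (Submodule.Quotient.mk x)) : H) = π x) ∧
    (FiniteDimensional ℝ ↥(LinearMap.ker Δ) →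
      FiniteDimensional ℝ (↥(LinearMap.ker d) ⧸
        Submodule.comap (LinearMap.ker d).subtype (LinearMap.range d))) := by
  -- the map from ker d to ker Δ
  set φ : ↥(LinearMap.ker d) →ₗ[ℝ] ↥(LinearMap.ker Δ) :=
    { toFun := fun x => ⟨π x, by simpa [LinearMap.mem_ker] using hπker (x : H)⟩
      map_add' := fun x y => by ext; simp
      map_smul' := fun c x => by ext; simp } with hφ
  have hφ_surj : Function.Surjective φ := by
    intro y
    have hyΔ : Δ (y : H) = 0 := y.2
    refine ⟨⟨(y : H), ?_⟩, ?_⟩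
    · simpa [LinearMap.mem_ker] using hker_d _ hyΔ
    · ext
      simp only [hφ, LinearMap.coe_mk, AddHom.coe_mk]
      exact hπid _ hyΔ
  have hφ_ker : LinearMap.ker φ =
      Submodule.comap (LinearMap.ker d).subtype (LinearMap.range d) := by
    ext x
    simp only [LinearMap.mem_ker, Submodule.mem_comap, Submodule.coe_subtype,
      LinearMap.mem_range, hφ, LinearMap.coe_mk, AddHom.coe_mk]
    constructor
    · intro hx
      have hx0 : π (x : H) = 0 := congrArg Subtype.val hx
      have hdx : d (x : H) = 0 := x.2
      have h1 : Δ (Gr (x : H)) = (x : H) := by rw [hGr]; simp [hx0]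
      refine ⟨dstar (Gr (x : H)), ?_⟩
      have h2 : d (Gr (x : H)) = 0 := by rw [hGrd, hdx, map_zero]
      calc d (dstar (Gr (x : H)))
          = d (dstar (Gr (x : H))) + dstar (d (Gr (x : H))) := by
            rw [h2]; simp
        _ = Δ (Gr (x : H)) := (hΔ _).symm
        _ = (x : H) := h1
    · rintro ⟨z, hz⟩
      have hΔπ : Δ (π (x : H)) = 0 := hπker _
      -- π x lies in the image of d
      have him : π (x : H) = d (z - dstar (Gr (x : H))) := by
        have hdx : d (x : H) = 0 := x.2
        have h2 : d (Gr (x : H)) = 0 := by rw [hGrd, hdx, map_zero]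
        have h1 : Δ (Gr (x : H)) = (x : H) - π (x : H) := hGr _
        have : (x : H) - π (x : H) = d (dstar (Gr (x : H))) := by
          rw [← h1, hΔ, h2, map_zero, add_zero]
        rw [map_sub, hz, ← this]
        abel
      have hnorm : ⟪π (x : H), π (x : H)⟫ = 0 := by
        nth_rewrite 1 [him]
        rw [hadj, hker_dstar _ hΔπ, inner_zero_right]
      have : π (x : H) = 0 := by
        have := inner_self_eq_zero.mp hnorm
        exact this
      ext
      simpa using this
  refine ⟨⟨(Submodule.quotEquivOfEq _ _ hφ_ker.symm).trans
    (φ.quotKerEquivOfSurjective hφ_surj), ?_⟩, ?_⟩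
  · intro x
    rfl
  · intro hfin
    exact FiniteDimensional.of_injective
      ((Submodule.quotEquivOfEq _ _ hφ_ker.symm).trans
        (φ.quotKerEquivOfSurjective hφ_surj)).toLinearMap
      (LinearEquiv.injective _)
end
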